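/- Every algebraic curvature tensor R on (V,J) satisfying Gray's first condition (G1): R(x,y,Jz,Ju) = R(x,y,z,u) for all x,y,z,u ∈ V, also satisfies Gray's second condition (G2): R(x,y,z,u) − R(Jx,Jy,z,u) = R(Jx,y,Jz,u) + R(Jx,y,z,Ju) for all x,y,z,u ∈ V. -/
import Mathlib


open scoped InnerProductSpace

/-- An algebraic curvature tensor satisfying Gray's first condition (G1)
also satisfies Gray's second condition (G2). -/
theorem gray_one_implies_gray_two
    {V : Type*} [NormedAddCommGroup V] [InnerProductSpace ℝ V] [FiniteDimensional ℝ V]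
    (J : V →ₗ[ℝ] V)
    (hJiso : ∀ x y : V, ⟪J x, J y⟫_ℝ = ⟪x, y⟫_ℝ)
    (hJJ : ∀ x : V, J (J x) = -x)
    (R : V →ₗ[ℝ] V →ₗ[ℝ] V →ₗ[ℝ] V →ₗ[ℝ] ℝ)
    (hR12 : ∀ x y z u : V, R x y z u = -R y x z u)
    (hR34 : ∀ x y z u : V, R x y z u = -R x y u z)
    (hRpair : ∀ x y z u : V, R x y z u = R z u x y)
    (hBianchi : ∀ x y z u : V, R x y z u + R y z x u + R z x y u = 0)
    (hG1 : ∀ x y z u : V, R x y (J z) (J u) = R x y z u) :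
    ∀ x y z u : V,
      R x y z u - R (J x) (J y) z u = R (J x) y (J z) u + R (J x) y z (J u) := by
  intro x y z u
  have h1 : R (J x) (J y) z u = R x y z u := by
    rw [hRpair, hG1, hRpair]
  have h2 : R (J x) y (J (J z)) (J u) = R (J x) y (J z) u := hG1 (J x) y (J z) u
  rw [hJJ z] at h2
  have h3 : R (J x) y (-z) (J u) = -R (J x) y z (J u) := by
    simp
  linarith
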